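/- Suppose κ is an infinite cardinal. If a graph G is κ-connected (i.e., G remains connected after the removal of any set of fewer than κ vertices, and has at least κ vertices), then G contains a subdivision of K_κ; in particular, K_κ is a minor of G. -/

import Mathlib

universe u

open Cardinal

def Colorable' {V : Type u} (G : SimpleGraph V) (μ : Cardinal.{u}) : Prop :=
  ∃ (β : Type u) (c : V → β), #β ≤ μ ∧ ∀ ⦃x y : V⦄, G.Adj x y → c x ≠ c y

def ChromaticEq {V : Type u} (G : SimpleGraph V) (μ : Cardinal.{u}) : Prop :=
  Colorable' G μ ∧ ∀ ν : Cardinal.{u}, ν < μ → ¬ Colorable' G ν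

def HasCompleteMinor {V : Type u} (G : SimpleGraph V) (κ : Cardinal.{u}) : Prop :=
  ∃ (ι : Type u) (U : ι → Set V), #ι = κ ∧
    (∀ i, (U i).Nonempty) ∧
    (∀ i j, i ≠ j → Disjoint (U i) (U j)) ∧
    (∀ i, (G.induce (U i)).Connected) ∧
    (∀ i j, i ≠ j → ∃ x ∈ U i, ∃ y ∈ U j, G.Adj x y)

def IsSetTree (T : Type u) [PartialOrder T] : Prop :=
  ∀ t : T, IsWellOrder {s : T // s < t} (· < ·)

def compGraph (T : Type u) [PartialOrder T] : SimpleGraph T :=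
  SimpleGraph.fromRel (· ≤ ·)

def IsSpecialTree (T : Type u) [PartialOrder T] (κ : Cardinal.{u}) : Prop :=
  ∃ (β : Type u) (f : T → β), #β ≤ κ ∧ ∀ ⦃s t : T⦄, s < t → f s ≠ f t

def HasChainOfSize (T : Type u) [PartialOrder T] (κ : Cardinal.{u}) : Prop :=
  ∃ C : Set T, IsChain (· ≤ ·) C ∧ #C = κ

def HasAntichainOfSize (T : Type u) [PartialOrder T] (κ : Cardinal.{u}) : Prop :=
  ∃ A : Set T, IsAntichain (· ≤ ·) A ∧ #A = κ

def HasIndepOfSize {V : Type u} (G : SimpleGraph V) (κ : Cardinal.{u}) : Prop :=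
  ∃ S : Set V, #S = κ ∧ ∀ x ∈ S, ∀ y ∈ S, ¬ G.Adj x y

def AllChainsCountable (T : Type u) [PartialOrder T] : Prop :=
  ∀ C : Set T, IsChain (· ≤ ·) C → #C ≤ ℵ₀

noncomputable def nodeHeight {T : Type u} [PartialOrder T] (hT : IsSetTree T) (t : T) : Ordinal.{u} :=
  @Ordinal.type {s : T // s < t} (· < ·) (hT t)

def KappaLambdaConnected {V : Type u} (G : SimpleGraph V) (κ μ : Cardinal.{u}) : Prop :=
  ∀ S : Set V, #S < κ → (Sᶜ : Set V).Nonempty ∧ #((G.induce (Sᶜ : Set V)).ConnectedComponent) < μ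

def KappaConnected {V : Type u} (G : SimpleGraph V) (κ : Cardinal.{u}) : Prop :=
  κ ≤ #V ∧ ∀ S : Set V, #S < κ → (G.induce (Sᶜ : Set V)).Connected

def ContainsSubdivisionOfComplete {V : Type u} (G : SimpleGraph V) (κ : Cardinal.{u}) : Prop :=
  ∃ (ι : Type u) (v : ι → V), #ι = κ ∧ Function.Injective v ∧
    ∃ p : ∀ i j : ι, G.Walk (v i) (v j),
      (∀ i j, i ≠ j → (p i j).IsPath) ∧
      (∀ i j k l, i ≠ j → k ≠ l → (i, j) ≠ (k, l) → (i, j) ≠ (l, k) →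
        ∀ x, x ∈ (p i j).support → x ∈ (p k l).support → x ∈ Set.range v) ∧
      (∀ i j k, i ≠ j → v k ∈ (p i j).support → k = i ∨ k = j)

def IsTGraph {T : Type u} [PartialOrder T] (G : SimpleGraph T) : Prop :=
  (∀ ⦃s t⦄, G.Adj s t → s < t ∨ t < s) ∧
  (∀ t s : T, s < t → ∃ r, s ≤ r ∧ r < t ∧ G.Adj r t)

namespace Stmt9

open SimpleGraph

variable {V : Type u} {G : SimpleGraph V}

/-- inclusion hom from an induced subgraph -/
def inclHom (s : Set V) : G.induce s →g G := ⟨Subtype.val, fun {_ _} h => h⟩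

lemma inclHom_inj (s : Set V) : Function.Injective (inclHom (G := G) s) :=
  Subtype.val_injective

lemma reachable_induce {s : Set V} {x y : V} (w : G.Walk x y)
    (hs : ∀ z ∈ w.support, z ∈ s) (hx : x ∈ s) (hy : y ∈ s) :
    (G.induce s).Reachable ⟨x, hx⟩ ⟨y, hy⟩ := by
  induction w with
  | nil => exact Reachable.refl _
  | @cons a b c h w ih =>
    have hb : b ∈ s := hs b (by simp [SimpleGraph.Walk.support_cons])
    have hadj : (G.induce s).Adj ⟨a, hx⟩ ⟨b, hb⟩ := h
    exact hadj.reachable.trans (ih (fun z hz => hs z (by simp [SimpleGraph.Walk.support_cons, hz])) hb hy)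

lemma exists_adj_end {x y : V} (hxy : x ≠ y) (w : G.Walk x y) :
    ∃ z ∈ w.support, z ≠ y ∧ G.Adj z y := by
  induction w with
  | nil => exact absurd rfl hxy
  | @cons a b c h w ih =>
    by_cases hb : b = c
    · subst hb
      exact ⟨a, by simp, hxy, h⟩
    · obtain ⟨z, hz, hzc, hadj⟩ := ih hb
      exact ⟨z, by simp [hz], hzc, hadj⟩

lemma end_notMem_takeUntil [DecidableEq V] {a b : V} {wp : G.Walk a b} (hp : wp.IsPath)
    {x : V} (hx : x ∈ wp.support) (hxb : x ≠ b) : b ∉ (wp.takeUntil x hx).support := by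
  intro hb
  have hnd : wp.support.Nodup := hp.support_nodup
  have hsupp : wp.support
      = (wp.takeUntil x hx).support ++ (wp.dropUntil x hx).support.tail := by
    conv_lhs => rw [← wp.take_spec hx]
    exact Walk.support_append _ _
  rw [hsupp] at hnd
  have hdisj := (List.nodup_append.mp hnd).2.2
  have hbtail : b ∈ (wp.dropUntil x hx).support.tail := by
    have hbend : b ∈ (wp.dropUntil x hx).support := Walk.end_mem_support _
    rw [Walk.support_eq_cons] at hbend
    rcases List.mem_cons.mp hbend with h | h
    · exact absurd h.symm hxb
    · exact h
  exact hdisj b hb b hbtail rfl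


abbrev Idx (κ : Cardinal.{u}) : Type u := κ.ord.ToType

variable (κ : Cardinal.{u})

noncomputable def rank (p : Idx κ × Idx κ) : Lex ((Idx κ) × Lex (Bool × Lex ((Idx κ) × (Idx κ)))) :=
  toLex (max p.1 p.2, toLex (decide (p.1 ≠ p.2), toLex (p.1, p.2)))

def R (p q : Idx κ × Idx κ) : Prop := rank κ p < rank κ q

lemma rank_inj : Function.Injective (rank κ) := by
  intro p q h
  have h1 := toLex.injective h
  have h2 := toLex.injective (congrArg Prod.snd h1)
  have h3 := toLex.injective (congrArg Prod.snd h2)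
  exact h3

lemma wfR : WellFounded (R κ) := InvImage.wf (rank κ) wellFounded_lt

lemma R_total {p q : Idx κ × Idx κ} (h : p ≠ q) : R κ p q ∨ R κ q p := by
  rcases lt_trichotomy (rank κ p) (rank κ q) with h' | h' | h'
  exacts [Or.inl h', absurd (rank_inj κ h') h, Or.inr h']

lemma R_iff (p q : Idx κ × Idx κ) : R κ p q ↔ max p.1 p.2 < max q.1 q.2 ∨
    (max p.1 p.2 = max q.1 q.2 ∧ (decide (p.1 ≠ p.2) < decide (q.1 ≠ q.2) ∨
      (decide (p.1 ≠ p.2) = decide (q.1 ≠ q.2) ∧ (p.1 < q.1 ∨ (p.1 = q.1 ∧ p.2 < q.2))))) := by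
  simp only [R, rank, Prod.Lex.lt_iff, ofLex_toLex]

lemma R_diag {a : Idx κ} {b c : Idx κ} (hbc : b ≠ c) (ha : a = b ∨ a = c) :
    R κ (a, a) (b, c) := by
  rw [R_iff]
  have hmax : a ≤ max b c := by
    rcases ha with rfl | rfl
    exacts [le_max_left _ _, le_max_right _ _]
  rcases eq_or_lt_of_le hmax with heq | hlt
  · refine Or.inr ⟨by simpa using heq, Or.inl ?_⟩
    simp [hbc, Bool.lt_iff]
  · exact Or.inl (by simpa using hlt)

lemma R_diag_diag {a b : Idx κ} (h : b < a) : R κ (b, b) (a, a) := by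
  rw [R_iff]
  exact Or.inl (by simpa using h)

lemma R_lower {p q : Idx κ × Idx κ} (h : R κ q p) :
    q.1 ≤ max p.1 p.2 ∧ q.2 ≤ max p.1 p.2 := by
  rw [R_iff] at h
  have hm : max q.1 q.2 ≤ max p.1 p.2 := by
    rcases h with h | ⟨h, _⟩
    exacts [le_of_lt h, le_of_eq h]
  exact ⟨le_trans (le_max_left _ _) hm, le_trans (le_max_right _ _) hm⟩

lemma card_initSeg (hκ : ℵ₀ ≤ κ) (p : Idx κ × Idx κ) : #{q | R κ q p} < κ := by
  set m := max p.1 p.2 with hm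
  have hsub : {q | R κ q p} ⊆ (Set.Iic m) ×ˢ (Set.Iic m) := by
    intro q hq
    exact ⟨(R_lower κ hq).1, (R_lower κ hq).2⟩
  have hIic : #(Set.Iic m) < κ := by
    rw [← Set.Iio_insert]
    calc #(insert m (Set.Iio m) : Set _) ≤ #(Set.Iio m) + 1 := Cardinal.mk_insert_le
    _ < κ := Cardinal.add_lt_of_lt hκ (Cardinal.mk_Iio_ord_toType m)
        (lt_of_lt_of_le Cardinal.one_lt_aleph0 hκ)
  calc #{q | R κ q p} ≤ #((Set.Iic m) ×ˢ (Set.Iic m) : Set _) := mk_le_mk_of_subset hsub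
    _ = #(Set.Iic m) * #(Set.Iic m) := by
        rw [Cardinal.mk_congr (Equiv.Set.prod _ _), Cardinal.mk_prod, Cardinal.lift_id]
    _ < κ := Cardinal.mul_lt_of_lt hκ hIic hIic

lemma idx_card : #(Idx κ) = κ := by rw [Cardinal.mk_toType, Cardinal.card_ord]

-- walk data
def WData (G : SimpleGraph V) : Type u := Σ' (x : V) (y : V), G.Walk x y
def supp (σ : WData G) : Set V := {z | z ∈ σ.2.2.support}

lemma supp_finite (σ : WData G) : (supp σ).Finite := List.finite_toSet _

variable {κ} in
noncomputable def SOf (p : Idx κ × Idx κ) (f : ∀ q, R κ q p → WData G) : Set V :=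
  ⋃ (q : {q // R κ q p}), supp (f q.1 q.2)

lemma card_SOf (hκ : ℵ₀ ≤ κ) (p : Idx κ × Idx κ) (f : ∀ q, R κ q p → WData G) :
    #(SOf p f) < κ := by
  have hI : #{q // R κ q p} < κ := card_initSeg κ hκ p
  by_cases hfin : {q | R κ q p}.Finite
  · have : (SOf p f).Finite := by
      haveI : Finite {q // R κ q p} := hfin
      exact Set.finite_iUnion (fun q => supp_finite _)
    exact lt_of_lt_of_le this.lt_aleph0 hκ
  · have hinf : ℵ₀ ≤ #{q // R κ q p} :=
      Cardinal.infinite_iff.mp (Set.infinite_coe_iff.mpr hfin)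
    calc #(SOf p f) ≤ #{q // R κ q p} * ⨆ (q : {q // R κ q p}), #(supp (f q.1 q.2)) :=
            Cardinal.mk_iUnion_le _
      _ ≤ #{q // R κ q p} * ℵ₀ := by
          refine mul_le_mul_right (ciSup_le' (fun q => ?_)) _
          haveI : Countable (supp (f q.1 q.2)) := (supp_finite _).countable
          exact Cardinal.mk_le_aleph0
      _ ≤ #{q // R κ q p} * #{q // R κ q p} := mul_le_mul_right hinf _
      _ = #{q // R κ q p} := Cardinal.mul_eq_self hinf
      _ < κ := hI

variable {κ}
variable (hκ : ℵ₀ ≤ κ) (hconn : KappaConnected G κ)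
include hconn in

lemma exists_fresh {T : Set V} (hT : #T < κ) : ∃ x, x ∉ T := by
  by_contra h
  push_neg at h
  have : T = Set.univ := Set.eq_univ_of_forall h
  rw [this, Cardinal.mk_univ] at hT
  exact absurd hconn.1 (not_le.mpr hT)

include hconn in
lemma exists_path {T : Set V} (hT : #T < κ) {x y : V} (hx : x ∉ T) (hy : y ∉ T) :
    ∃ w : G.Walk x y, w.IsPath ∧ ∀ z ∈ w.support, z ∉ T := by
  classical
  have hc := hconn.2 T hT
  have hr : (G.induce (Tᶜ : Set V)).Reachable ⟨x, hx⟩ ⟨y, hy⟩ := hc.preconnected _ _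
  obtain ⟨w0⟩ := hr
  let w1 : (G.induce (Tᶜ : Set V)).Walk ⟨x, hx⟩ ⟨y, hy⟩ := w0.toPath
  have hp1 : w1.IsPath := w0.toPath.2
  refine ⟨(w1.map (inclHom _)).copy rfl rfl, ?_, ?_⟩
  · refine (Walk.isPath_copy _ _ _).mpr ?_
    exact Walk.map_isPath_of_injective (inclHom_inj _) hp1
  · intro z hz
    change z ∈ (w1.map (inclHom _)).support at hz; rw [Walk.support_map] at hz
    obtain ⟨z', _, rfl⟩ := List.mem_map.mp hz
    exact z'.2

noncomputable def step (p : Idx κ × Idx κ) (prev : ∀ q, R κ q p → WData G) : WData G :=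
  if h : p.1 = p.2 then
    ⟨Classical.choose (exists_fresh hconn (card_SOf κ hκ p prev)),
      Classical.choose (exists_fresh hconn (card_SOf κ hκ p prev)), Walk.nil⟩
  else
    let x := (prev (p.1, p.1) (R_diag κ h (Or.inl rfl))).1
    let y := (prev (p.2, p.2) (R_diag κ h (Or.inr rfl))).1
    let T := SOf p prev \ {x, y}
    have hT : #T < κ := lt_of_le_of_lt (mk_le_mk_of_subset Set.diff_subset) (card_SOf κ hκ p prev)
    have hx : x ∉ T := fun hx' => hx'.2 (by simp)
    have hy : y ∉ T := fun hy' => hy'.2 (by simp)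
    ⟨x, y, Classical.choose (exists_path hconn hT hx hy)⟩

noncomputable def F : Idx κ × Idx κ → WData G := (wfR κ).fix (step hκ hconn)

lemma F_eq (p : Idx κ × Idx κ) :
    F hκ hconn p = step hκ hconn p (fun q _ => F hκ hconn q) :=
  WellFounded.fix_eq _ _ _

noncomputable def S (p : Idx κ × Idx κ) : Set V := SOf p (fun q (_ : R κ q p) => F hκ hconn q)

noncomputable def v (a : Idx κ) : V := (F hκ hconn (a, a)).1

lemma diag_spec (a : Idx κ) :
    (F hκ hconn (a, a)).1 ∉ S hκ hconn (a, a) ∧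
    supp (F hκ hconn (a, a)) = {(F hκ hconn (a, a)).1} := by
  have h := F_eq hκ hconn (a, a)
  simp only [step, eq_self_iff_true, ↓reduceDIte] at h
  constructor
  · rw [h]
    exact Classical.choose_spec (exists_fresh hconn (card_SOf κ hκ (a, a) _))
  · rw [h]
    simp [supp]

lemma off_spec {a b : Idx κ} (hab : a ≠ b) :
    (F hκ hconn (a, b)).1 = v hκ hconn a ∧
    (F hκ hconn (a, b)).2.1 = v hκ hconn b ∧
    (F hκ hconn (a, b)).2.2.IsPath ∧
    (∀ z ∈ (F hκ hconn (a, b)).2.2.support,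
      z ∈ S hκ hconn (a, b) → z = v hκ hconn a ∨ z = v hκ hconn b) := by
  have h := F_eq hκ hconn (a, b)
  simp only [step, hab, ↓reduceDIte] at h
  have hT : #(S hκ hconn (a, b) \ {v hκ hconn a, v hκ hconn b} : Set V) < κ :=
    lt_of_le_of_lt (mk_le_mk_of_subset Set.diff_subset)
      (card_SOf κ hκ (a, b) (fun q _ => F hκ hconn q))
  have hx : v hκ hconn a ∉ S hκ hconn (a, b) \ {v hκ hconn a, v hκ hconn b} :=
    fun hx' => hx'.2 (by simp)
  have hy : v hκ hconn b ∉ S hκ hconn (a, b) \ {v hκ hconn a, v hκ hconn b} :=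
    fun hy' => hy'.2 (by simp)
  have h2 : F hκ hconn (a, b) =
      ⟨v hκ hconn a, v hκ hconn b, Classical.choose (exists_path hconn hT hx hy)⟩ :=
    h.trans (by rfl)
  have hspec := Classical.choose_spec (exists_path hconn hT hx hy)
  rw [h2]
  refine ⟨rfl, rfl, hspec.1, ?_⟩
  intro z hz hzS
  have hnot := hspec.2 z hz
  by_contra hne
  push_neg at hne
  exact hnot ⟨hzS, by simp [hne.1, hne.2]⟩

lemma supp_subset_S {q p : Idx κ × Idx κ} (h : R κ q p) :
    supp (F hκ hconn q) ⊆ S hκ hconn p := by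
  intro z hz
  exact Set.mem_iUnion.mpr ⟨⟨q, h⟩, hz⟩

lemma v_notMem_S (a : Idx κ) : v hκ hconn a ∉ S hκ hconn (a, a) := (diag_spec hκ hconn a).1

lemma supp_diag (a : Idx κ) : supp (F hκ hconn (a, a)) = {v hκ hconn a} :=
  (diag_spec hκ hconn a).2

lemma R_total' {p q : Idx κ × Idx κ} (h : p ≠ q) : R κ p q ∨ R κ q p := R_total κ h
lemma R_diag_diag' {a b : Idx κ} (h : b < a) : R κ (b, b) (a, a) := R_diag_diag κ h

lemma v_inj : Function.Injective (v hκ hconn) := by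
  intro a b hab
  by_contra hne
  wlog hlt : b < a generalizing a b
  · exact this hab.symm (Ne.symm hne) ((Ne.lt_or_gt hne).resolve_right hlt)
  have h1 : v hκ hconn b ∈ S hκ hconn (a, a) :=
    supp_subset_S hκ hconn (R_diag_diag' hlt) (by rw [supp_diag]; rfl)
  rw [← hab] at h1
  exact v_notMem_S hκ hconn a h1

/-- the walk for an off-diagonal pair, recast to have endpoints `v a`, `v b`. -/
noncomputable def pw {a b : Idx κ} (hab : a ≠ b) :
    G.Walk (v hκ hconn a) (v hκ hconn b) :=
  (F hκ hconn (a, b)).2.2.copy (off_spec hκ hconn hab).1 (off_spec hκ hconn hab).2.1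

lemma pw_isPath {a b : Idx κ} (hab : a ≠ b) : (pw hκ hconn hab).IsPath := by
  rw [pw, Walk.isPath_copy]
  exact (off_spec hκ hconn hab).2.2.1

lemma pw_support {a b : Idx κ} (hab : a ≠ b) :
    (pw hκ hconn hab).support = (F hκ hconn (a, b)).2.2.support := by
  rw [pw, Walk.support_copy]

lemma pw_supp {a b : Idx κ} (hab : a ≠ b) {z : V} (hz : z ∈ (pw hκ hconn hab).support) :
    z ∈ supp (F hκ hconn (a, b)) := by
  rwa [pw_support] at hz

/-- a vertex on two different paths is a branch vertex. -/
lemma crossing {a b c d : Idx κ} (hab : a ≠ b) (hcd : c ≠ d)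
    (hpq : (a, b) ≠ (c, d)) {z : V}
    (hz1 : z ∈ (pw hκ hconn hab).support) (hz2 : z ∈ (pw hκ hconn hcd).support) :
    z = v hκ hconn a ∨ z = v hκ hconn b ∨ z = v hκ hconn c ∨ z = v hκ hconn d := by
  rcases R_total' hpq with h | h
  · have hzS : z ∈ S hκ hconn (c, d) := supp_subset_S hκ hconn h (pw_supp hκ hconn hab hz1)
    rcases (off_spec hκ hconn hcd).2.2.2 z (by rwa [← pw_support hκ hconn hcd]) hzS with h' | h'
    · exact Or.inr (Or.inr (Or.inl h'))
    · exact Or.inr (Or.inr (Or.inr h'))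
  · have hzS : z ∈ S hκ hconn (a, b) := supp_subset_S hκ hconn h (pw_supp hκ hconn hcd hz2)
    rcases (off_spec hκ hconn hab).2.2.2 z (by rwa [← pw_support hκ hconn hab]) hzS with h' | h'
    · exact Or.inl h'
    · exact Or.inr (Or.inl h')

/-- a branch vertex on a path must be an endpoint. -/
lemma branch_on_path {a b k : Idx κ} (hab : a ≠ b)
    (hk : v hκ hconn k ∈ (pw hκ hconn hab).support) : k = a ∨ k = b := by
  have hne : ((k, k) : Idx κ × Idx κ) ≠ (a, b) := by
    intro h
    rw [Prod.mk.injEq] at h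
    exact hab (h.1.symm.trans h.2)
  rcases R_total' hne with h | h
  · have hzS : v hκ hconn k ∈ S hκ hconn (a, b) :=
      supp_subset_S hκ hconn h (by rw [supp_diag]; rfl)
    rcases (off_spec hκ hconn hab).2.2.2 _ (by rwa [← pw_support hκ hconn hab]) hzS with h' | h'
    · exact Or.inl (v_inj hκ hconn h')
    · exact Or.inr (v_inj hκ hconn h')
  · exact absurd (supp_subset_S hκ hconn h (pw_supp hκ hconn hab hk)) (v_notMem_S hκ hconn k)


noncomputable def p_cast {i j : Idx κ} (h : i = j) : G.Walk (v hκ hconn i) (v hκ hconn j) :=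
  Walk.nil.copy rfl (congrArg _ h)

include hκ hconn in
theorem subdivision : ContainsSubdivisionOfComplete G κ := by
  classical
  refine ⟨Idx κ, v hκ hconn, idx_card κ, v_inj hκ hconn, ?_⟩
  refine ⟨fun i j => if h : i = j then p_cast hκ hconn h else pw hκ hconn h, ?_, ?_, ?_⟩
  · intro i j hij
    simp only [dif_neg hij]
    exact pw_isPath hκ hconn hij
  · intro i j k l hij hkl hne _ x hx1 hx2
    simp only [dif_neg hij] at hx1
    simp only [dif_neg hkl] at hx2
    rcases crossing hκ hconn hij hkl (by simpa using hne) hx1 hx2 with h | h | h | h <;>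
      exact ⟨_, h.symm⟩
  · intro i j k hij hk
    simp only [dif_neg hij] at hk
    exact branch_on_path hκ hconn hij hk

/-- internal vertices of the path between branch vertices i and j -/
noncomputable def interSet (i j : Idx κ) : Set V :=
  {z | z ∈ (F hκ hconn (i, j)).2.2.support ∧ z ≠ v hκ hconn i ∧ z ≠ v hκ hconn j}

noncomputable def U (i : Idx κ) : Set V :=
  {v hκ hconn i} ∪ ⋃ (j : Idx κ) (_ : i < j), interSet hκ hconn i j

lemma v_mem_U (i : Idx κ) : v hκ hconn i ∈ U hκ hconn i := Or.inl rfl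

lemma inter_no_branch {i j : Idx κ} (hij : i ≠ j) {z : V}
    (hz : z ∈ interSet hκ hconn i j) (k : Idx κ) : z ≠ v hκ hconn k := by
  rintro rfl
  rcases branch_on_path hκ hconn hij (by rw [pw_support]; exact hz.1) with rfl | rfl
  · exact hz.2.1 rfl
  · exact hz.2.2 rfl

lemma inter_disjoint {i j k l : Idx κ} (hij : i ≠ j) (hkl : k ≠ l)
    (hne : (i, j) ≠ (k, l)) {z : V}
    (hz1 : z ∈ interSet hκ hconn i j) (hz2 : z ∈ interSet hκ hconn k l) : False := by
  rcases crossing hκ hconn hij hkl hne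
      (by rw [pw_support]; exact hz1.1) (by rw [pw_support]; exact hz2.1) with h | h | h | h
  · exact inter_no_branch hκ hconn hij hz1 i h
  · exact inter_no_branch hκ hconn hij hz1 j h
  · exact inter_no_branch hκ hconn hij hz1 k h
  · exact inter_no_branch hκ hconn hij hz1 l h

lemma U_disjoint {i j : Idx κ} (hij : i ≠ j) : Disjoint (U hκ hconn i) (U hκ hconn j) := by
  rw [Set.disjoint_left]
  rintro z (rfl | hz) hzj
  · rcases hzj with h | hz'
    · exact hij (v_inj hκ hconn h)
    · obtain ⟨s, hs⟩ := Set.mem_iUnion.mp hz'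
      obtain ⟨hjs, hmem⟩ := Set.mem_iUnion.mp hs
      exact inter_no_branch hκ hconn (ne_of_lt hjs) hmem i rfl
  · obtain ⟨s, hs⟩ := Set.mem_iUnion.mp hz
    obtain ⟨his, hmem⟩ := Set.mem_iUnion.mp hs
    rcases hzj with h | hz'
    · exact inter_no_branch hκ hconn (ne_of_lt his) hmem j h
    · obtain ⟨t, ht⟩ := Set.mem_iUnion.mp hz'
      obtain ⟨hjt, hmem'⟩ := Set.mem_iUnion.mp ht
      refine inter_disjoint hκ hconn (ne_of_lt his) (ne_of_lt hjt) ?_ hmem hmem'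
      intro h
      rw [Prod.mk.injEq] at h
      exact hij h.1

lemma U_adj_aux {i j : Idx κ} (hij : i < j) :
    ∃ x ∈ U hκ hconn i, ∃ y ∈ U hκ hconn j, G.Adj x y := by
  have hne : i ≠ j := ne_of_lt hij
  have hvne : v hκ hconn i ≠ v hκ hconn j := fun h => hne (v_inj hκ hconn h)
  obtain ⟨z, hz, hzv, hadj⟩ := exists_adj_end hvne (pw hκ hconn hne)
  refine ⟨z, ?_, v hκ hconn j, v_mem_U hκ hconn j, hadj⟩
  by_cases hzi : z = v hκ hconn i
  · rw [hzi]; exact v_mem_U hκ hconn i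
  · exact Or.inr (Set.mem_iUnion.mpr ⟨j, Set.mem_iUnion.mpr
      ⟨hij, ⟨by rwa [← pw_support hκ hconn hne], hzi, hzv⟩⟩⟩)

lemma U_connected (i : Idx κ) : (G.induce (U hκ hconn i)).Connected := by
  classical
  rw [connected_iff]
  refine ⟨?_, ⟨⟨v hκ hconn i, v_mem_U hκ hconn i⟩⟩⟩
  have claim : ∀ z (hz : z ∈ U hκ hconn i),
      (G.induce (U hκ hconn i)).Reachable ⟨z, hz⟩ ⟨v hκ hconn i, v_mem_U hκ hconn i⟩ := by
    rintro z (rfl | hz)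
    · exact Reachable.refl _
    · obtain ⟨j, hj⟩ := Set.mem_iUnion.mp hz
      obtain ⟨hij, hmem⟩ := Set.mem_iUnion.mp hj
      have hne : i ≠ j := ne_of_lt hij
      have hzsupp : z ∈ (pw hκ hconn hne).support := by
        rw [pw_support]; exact hmem.1
      have hW := end_notMem_takeUntil (pw_isPath hκ hconn hne) hzsupp hmem.2.2
      have hsub : ∀ t ∈ ((pw hκ hconn hne).takeUntil z hzsupp).support, t ∈ U hκ hconn i := by
        intro t ht
        by_cases hti : t = v hκ hconn i
        · exact Or.inl hti
        · have htj : t ≠ v hκ hconn j := fun h => hW (h ▸ ht)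
          refine Or.inr (Set.mem_iUnion.mpr ⟨j, Set.mem_iUnion.mpr ⟨hij, ?_⟩⟩)
          have hts : t ∈ (F hκ hconn (i, j)).2.2.support := by
            rw [← pw_support hκ hconn hne]
            exact Walk.support_takeUntil_subset _ _ ht
          exact ⟨hts, hti, htj⟩
      exact (reachable_induce ((pw hκ hconn hne).takeUntil z hzsupp) hsub
        (v_mem_U hκ hconn i) (Or.inr hz)).symm
  intro x y
  exact (claim x.1 x.2).trans (claim y.1 y.2).symm

include hκ hconn in
theorem minor : HasCompleteMinor G κ := by
  refine ⟨Idx κ, U hκ hconn, idx_card κ, ?_, ?_, U_connected hκ hconn, ?_⟩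
  · exact fun i => ⟨v hκ hconn i, v_mem_U hκ hconn i⟩
  · exact fun i j hij => U_disjoint hκ hconn hij
  · intro i j hij
    rcases hij.lt_or_gt with h | h
    · exact U_adj_aux hκ hconn h
    · obtain ⟨x, hx, y, hy, hadj⟩ := U_adj_aux hκ hconn h
      exact ⟨y, hy, x, hx, hadj.symm⟩

end Stmt9

/-- a κ-connected graph (κ infinite) contains a subdivision of K_κ,
in particular K_κ is a minor of it. -/
theorem stmt9 (κ : Cardinal.{u}) (hκ : ℵ₀ ≤ κ) {V : Type u} (G : SimpleGraph V)
    (hconn : KappaConnected G κ) :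
    ContainsSubdivisionOfComplete G κ ∧ HasCompleteMinor G κ := by
  exact ⟨Stmt9.subdivision hκ hconn, Stmt9.minor hκ hconn⟩
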